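/- The function diam_r on nonempty closed subsets of a compact metric space is upper semicontinuous with respect to the Hausdorff metric: if A_n → B then limsup_n diam_r(A_n) ≤ diam_r(B). -/
import Mathlib


open Metric Filter

noncomputable def minSep {X : Type*} [MetricSpace X] {r : ℕ} (x : Fin r → X) : ℝ :=
  ⨅ p : {p : Fin r × Fin r // p.1 ≠ p.2}, dist (x p.1.1) (x p.1.2)

noncomputable def diamr {X : Type*} [MetricSpace X] (r : ℕ) (B : Set X) : ℝ :=
  sSup { s | ∃ x : Fin r → X, (∀ i, x i ∈ B) ∧ s = minSep x }

lemma pair_ne {r : ℕ} (hr : 2 ≤ r) :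
    Nonempty {p : Fin r × Fin r // p.1 ≠ p.2} :=
  ⟨⟨(⟨0, by omega⟩, ⟨1, by omega⟩), by simp [Fin.ext_iff]⟩⟩

lemma minSep_nonneg {X : Type*} [MetricSpace X] {r : ℕ} (x : Fin r → X) :
    0 ≤ minSep x :=
  Real.iInf_nonneg (fun _ => dist_nonneg)

lemma minSep_bddBelow {X : Type*} [MetricSpace X] {r : ℕ} (x : Fin r → X) :
    BddBelow (Set.range fun p : {p : Fin r × Fin r // p.1 ≠ p.2} =>
      dist (x p.1.1) (x p.1.2)) :=
  ⟨0, by rintro _ ⟨p, rfl⟩; exact dist_nonneg⟩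

lemma minSep_le_two {X : Type*} [MetricSpace X] {r : ℕ} (hr : 2 ≤ r) (x : Fin r → X) :
    minSep x ≤ dist (x ⟨0, by omega⟩) (x ⟨1, by omega⟩) :=
  ciInf_le (minSep_bddBelow x) ⟨(⟨0, by omega⟩, ⟨1, by omega⟩), by simp [Fin.ext_iff]⟩

lemma minSep_le_add {X : Type*} [MetricSpace X] {r : ℕ} (hr : 2 ≤ r)
    (x y : Fin r → X) {δ : ℝ} (h : ∀ i, dist (x i) (y i) ≤ δ) :
    minSep x ≤ minSep y + 2 * δ := by
  have := pair_ne hr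
  rw [← sub_le_iff_le_add]
  apply le_ciInf
  intro p
  have h1 : minSep x ≤ dist (x p.1.1) (x p.1.2) := ciInf_le (minSep_bddBelow x) p
  have h2 : dist (x p.1.1) (x p.1.2) ≤
      dist (x p.1.1) (y p.1.1) + dist (y p.1.1) (y p.1.2) + dist (y p.1.2) (x p.1.2) :=
    dist_triangle4 _ _ _ _
  have h3 := h p.1.1
  have h4 := h p.1.2
  rw [dist_comm (y p.1.2)] at h2
  linarith

lemma diamr_bddAbove {X : Type*} [MetricSpace X] [CompactSpace X] {r : ℕ} (hr : 2 ≤ r)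
    (B : Set X) :
    BddAbove { s | ∃ x : Fin r → X, (∀ i, x i ∈ B) ∧ s = minSep x } := by
  refine ⟨diam (Set.univ : Set X), ?_⟩
  rintro _ ⟨x, hx, rfl⟩
  refine (minSep_le_two hr x).trans ?_
  exact dist_le_diam_of_mem isCompact_univ.isBounded (Set.mem_univ _) (Set.mem_univ _)

theorem stmt2 {X : Type*} [MetricSpace X] [CompactSpace X] (r : ℕ) (hr : 2 ≤ r)
    (A : ℕ → Set X) (B : Set X)
    (hAc : ∀ n, IsClosed (A n)) (hAne : ∀ n, (A n).Nonempty)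
    (hBc : IsClosed B) (hBne : B.Nonempty)
    (hconv : Tendsto (fun n => hausdorffDist (A n) B) atTop (nhds 0)) :
    limsup (fun n => diamr r (A n)) atTop ≤ diamr r B := by
  have hBcomp : IsCompact B := hBc.isCompact
  have hbd : ∀ s : Set X, Bornology.IsBounded s :=
    fun s => isCompact_univ.isBounded.subset (Set.subset_univ _)
  -- key pointwise bound
  have key : ∀ n, diamr r (A n) ≤ diamr r B + 2 * hausdorffDist (A n) B := by
    intro n
    apply csSup_le
    · obtain ⟨a, ha⟩ := hAne n
      exact ⟨minSep (fun _ => a), fun _ => a, fun _ => ha, rfl⟩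
    rintro _ ⟨x, hx, rfl⟩
    have hEne : EMetric.hausdorffEdist (A n) B ≠ ⊤ :=
      hausdorffEdist_ne_top_of_nonempty_of_bounded (hAne n) hBne (hbd _) (hbd _)
    have hy : ∀ i : Fin r, ∃ y ∈ B, dist (x i) y ≤ hausdorffDist (A n) B := by
      intro i
      obtain ⟨y, hyB, hyd⟩ := hBcomp.exists_infDist_eq_dist hBne (x i)
      exact ⟨y, hyB, by rw [← hyd]; exact infDist_le_hausdorffDist_of_mem (hx i) hEne⟩
    choose y hyB hyd using hy
    have h1 : minSep x ≤ minSep y + 2 * hausdorffDist (A n) B :=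
      minSep_le_add hr x y hyd
    have h2 : minSep y ≤ diamr r B :=
      le_csSup (diamr_bddAbove hr B) ⟨y, hyB, rfl⟩
    linarith
  -- nonnegativity of diamr (A n) for coboundedness
  have hnn : ∀ n, 0 ≤ diamr r (A n) := by
    intro n
    obtain ⟨a, ha⟩ := hAne n
    have : minSep (fun _ : Fin r => a) ≤ diamr r (A n) :=
      le_csSup (diamr_bddAbove hr (A n)) ⟨fun _ => a, fun _ => ha, rfl⟩
    exact le_trans (minSep_nonneg _) this
  have hcob : IsCoboundedUnder (· ≤ ·) atTop (fun n => diamr r (A n)) :=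
    isCoboundedUnder_le_of_le atTop (x := 0) hnn
  apply le_of_forall_pos_le_add
  intro ε hε
  apply Filter.limsup_le_of_le hcob
  have hev : ∀ᶠ n in atTop, hausdorffDist (A n) B < ε / 2 := by
    have := hconv.eventually (gt_mem_nhds (by linarith : (0:ℝ) < ε / 2))
    exact this
  filter_upwards [hev] with n hn
  have := key n
  linarith
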